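/- There exist four pairwise commuting 4×4 matrices A₁, A₂, A₃, A₄ over a field k such that the unital k-algebra they generate has dimension 5 > 4. Concretely, taking A₁ = E₁₃, A₂ = E₁₄, A₃ = E₂₃, A₄ = E₂₄ (standard matrix units), these matrices pairwise commute and dim_k k[E₁₃, E₁₄, E₂₃, E₂₄] = 5. -/

import Mathlib

open Matrix

section Aux
variable (k : Type) [Field k]

private noncomputable def bvec : Fin 5 → Matrix (Fin 4) (Fin 4) k :=
  ![1, Matrix.single 0 2 1, Matrix.single 0 3 1, Matrix.single 1 2 1, Matrix.single 1 3 1]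

private lemma range_bvec : Set.range (bvec k) =
    ({1, Matrix.single 0 2 1, Matrix.single 0 3 1, Matrix.single 1 2 1,
      Matrix.single 1 3 1} : Set (Matrix (Fin 4) (Fin 4) k)) := by
  ext x; simp [bvec, Matrix.range_cons, Matrix.range_empty]; tauto

private lemma bvec_li : LinearIndependent k (bvec k) := by
  rw [Fintype.linearIndependent_iff]
  intro g h
  have h' : ∀ i j : Fin 4, (∑ m, g m • bvec k m) i j = 0 := by
    intro i j; rw [h]; rfl
  simp only [Fin.sum_univ_five, bvec, Matrix.add_apply, Matrix.smul_apply,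
    Matrix.cons_val_zero, Matrix.cons_val_one, Matrix.head_cons,
    Matrix.cons_val_two, Matrix.cons_val_three, Matrix.cons_val_four,
    Matrix.tail_cons, Matrix.head_fin_const,
    Matrix.one_apply, Matrix.single, Matrix.of_apply, smul_eq_mul] at h'
  have h0 := h' 0 0
  have h1 := h' 0 2
  have h2 := h' 0 3
  have h3 := h' 1 2
  have h4 := h' 1 3
  simp (config := { decide := true }) at h0 h1 h2 h3 h4
  intro i; fin_cases i
  · exact h0
  · exact h1
  · exact h2
  · exact h3
  · exact h4

private lemma mul_closed : ∀ x y : Matrix (Fin 4) (Fin 4) k,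
    x ∈ Submodule.span k (Set.range (bvec k)) → y ∈ Submodule.span k (Set.range (bvec k)) →
    x * y ∈ Submodule.span k (Set.range (bvec k)) := by
  intro x y hx hy
  have : Submodule.span k (Set.range (bvec k)) * Submodule.span k (Set.range (bvec k)) ≤
      Submodule.span k (Set.range (bvec k)) := by
    rw [Submodule.span_mul_span]
    apply Submodule.span_le.2
    rintro z ⟨a, ha, b, hb, rfl⟩
    rw [range_bvec] at ha hb
    simp only [Set.mem_insert_iff, Set.mem_singleton_iff] at ha hb
    rcases ha with rfl|rfl|rfl|rfl|rfl <;> rcases hb with rfl|rfl|rfl|rfl|rfl <;> beta_reduce <;>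
      first
        | (rw [one_mul]; exact Submodule.subset_span (by rw [range_bvec]; simp))
        | (rw [mul_one]; exact Submodule.subset_span (by rw [range_bvec]; simp))
        | (rw [Matrix.single_mul_single_of_ne _ _ _ _ (by decide)]; exact Submodule.zero_mem _)
  exact this (Submodule.mul_mem_mul hx hy)

private noncomputable def T : Subalgebra k (Matrix (Fin 4) (Fin 4) k) :=
  (Submodule.span k (Set.range (bvec k))).toSubalgebra
    (Submodule.subset_span ⟨0, rfl⟩) (mul_closed k)

end Aux

theorem four_commuting_matrices_dim_five (k : Type) [Field k] :
    ∃ A₁ A₂ A₃ A₄ : Matrix (Fin 4) (Fin 4) k,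
      A₁ = Matrix.single 0 2 1 ∧ A₂ = Matrix.single 0 3 1 ∧
      A₃ = Matrix.single 1 2 1 ∧ A₄ = Matrix.single 1 3 1 ∧
      (∀ A ∈ ({A₁, A₂, A₃, A₄} : Set (Matrix (Fin 4) (Fin 4) k)),
        ∀ B ∈ ({A₁, A₂, A₃, A₄} : Set (Matrix (Fin 4) (Fin 4) k)), Commute A B) ∧
      Module.finrank k (Algebra.adjoin k ({A₁, A₂, A₃, A₄} :
        Set (Matrix (Fin 4) (Fin 4) k))) = 5 ∧ 4 < 5 := by
  refine ⟨_, _, _, _, rfl, rfl, rfl, rfl, ?_, ?_, by norm_num⟩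
  · intro A hA B hB
    simp only [Set.mem_insert_iff, Set.mem_singleton_iff] at hA hB
    unfold Commute SemiconjBy
    rcases hA with rfl|rfl|rfl|rfl <;> rcases hB with rfl|rfl|rfl|rfl <;>
      first
        | rfl
        | rw [Matrix.single_mul_single_of_ne _ _ _ _ (by decide),
            Matrix.single_mul_single_of_ne _ _ _ _ (by decide)]
  · have hadj : Algebra.adjoin k ({Matrix.single 0 2 1, Matrix.single 0 3 1,
        Matrix.single 1 2 1, Matrix.single 1 3 1} : Set (Matrix (Fin 4) (Fin 4) k)) = T k := by
      apply le_antisymm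
      · apply Algebra.adjoin_le
        intro x hx
        show x ∈ Submodule.span k (Set.range (bvec k))
        apply Submodule.subset_span
        rw [range_bvec]
        simp only [Set.mem_insert_iff, Set.mem_singleton_iff] at hx ⊢
        tauto
      · show Subalgebra.toSubmodule (T k) ≤ Subalgebra.toSubmodule (Algebra.adjoin k _)
        show Submodule.span k (Set.range (bvec k)) ≤ _
        apply Submodule.span_le.2
        rw [range_bvec]
        rintro x (rfl|rfl|rfl|rfl|rfl)
        · exact (Algebra.adjoin k _).one_mem
        · exact Algebra.subset_adjoin (by simp)
        · exact Algebra.subset_adjoin (by simp)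
        · exact Algebra.subset_adjoin (by simp)
        · exact Algebra.subset_adjoin (by simp)
    rw [hadj]
    have : Module.finrank k (T k) =
        Module.finrank k (Submodule.span k (Set.range (bvec k))) := rfl
    rw [this, finrank_span_eq_card (bvec_li k), Fintype.card_fin]
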